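/- arXiv:2006.08157 — 3 statements merged into one kernel-verified Lean document; each statement's English description precedes it below -/
import Mathlib

section
/- If f : ℝ^d → ℝ is nonnegative with (α, L)-Hölder continuous gradient for α ∈ (0,1], then for all w, ‖∇f(w)‖₂ ≤ (1 + 1/α)^{α/(1+α)} · L^{1/(1+α)} · f(w)^{α/(1+α)}. -/
set_option maxHeartbeats 1000000
open scoped RealInnerProductSpace

lemma grad_continuous {d : ℕ} (L α : ℝ) (hα : 0 < α)
    (f : EuclideanSpace ℝ (Fin d) → ℝ)
    (hholder : ∀ w v, ‖gradient f w - gradient f v‖ ≤ L * ‖w - v‖ ^ α) :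
    Continuous (gradient f) := by
  rw [continuous_iff_continuousAt]
  intro x
  rw [ContinuousAt, tendsto_iff_norm_sub_tendsto_zero]
  have hb : Filter.Tendsto (fun y => L * ‖y - x‖ ^ α) (nhds x) (nhds 0) := by
    have h1 : ContinuousAt (fun t : ℝ => t ^ α) 0 :=
      Real.continuousAt_rpow_const 0 α (Or.inr hα.le)
    have h2 : Filter.Tendsto (fun y : EuclideanSpace ℝ (Fin d) => ‖y - x‖) (nhds x) (nhds 0) := by
      have := ((continuous_id.sub (continuous_const (y := x))).norm.tendsto x)
      simpa using this
    have := (h1.tendsto.comp h2).const_mul L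
    simpa [Real.zero_rpow hα.ne'] using this
  refine squeeze_zero (fun y => norm_nonneg _) (fun y => hholder y x) hb

lemma descent {d : ℕ} (L α : ℝ) (hL : 0 < L) (hα : 0 < α)
    (f : EuclideanSpace ℝ (Fin d) → ℝ)
    (hdiff : Differentiable ℝ f)
    (hholder : ∀ w v, ‖gradient f w - gradient f v‖ ≤ L * ‖w - v‖ ^ α)
    (w v : EuclideanSpace ℝ (Fin d)) :
    f v ≤ f w + ⟪gradient f w, v - w⟫ + L / (1 + α) * ‖v - w‖ ^ (1 + α) := by
  set φ' : ℝ → ℝ := fun t => ⟪gradient f (w + t • (v - w)), v - w⟫ with hφ'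
  have hderiv : ∀ t : ℝ, HasDerivAt (fun s : ℝ => f (w + s • (v - w))) (φ' t) t := by
    intro t
    have h1 : HasFDerivAt f ((InnerProductSpace.toDual ℝ _) (gradient f (w + t • (v - w))))
        (w + t • (v - w)) := (hdiff _).hasGradientAt.hasFDerivAt
    have h2 : HasDerivAt (fun s : ℝ => w + s • (v - w)) (v - w) t := by
      simpa using ((hasDerivAt_id t).smul_const (v - w)).const_add w
    exact h1.comp_hasDerivAt t h2
  have gcont := grad_continuous L α hα f hholder
  have hcont : Continuous φ' := by
    apply Continuous.inner
    · exact gcont.comp (continuous_const.add (continuous_id.smul continuous_const))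
    · exact continuous_const
  have hftc : ∫ t in (0:ℝ)..1, φ' t = f (w + (1:ℝ) • (v - w)) - f (w + (0:ℝ) • (v - w)) :=
    intervalIntegral.integral_eq_sub_of_hasDerivAt (fun t _ => hderiv t)
      (hcont.intervalIntegrable 0 1)
  have hfv : f v - f w = ∫ t in (0:ℝ)..1, φ' t := by
    rw [hftc]; simp
  have hrpow_cont : Continuous (fun t : ℝ => t ^ α) := by
    rw [continuous_iff_continuousAt]
    exact fun t => Real.continuousAt_rpow_const t α (Or.inr hα.le)
  have hubcont : Continuous (fun t : ℝ =>
      ⟪gradient f w, v - w⟫ + L * t ^ α * ‖v - w‖ ^ (1 + α)) :=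
    continuous_const.add (((continuous_const.mul hrpow_cont).mul continuous_const))
  have hbound : ∫ t in (0:ℝ)..1, φ' t ≤
      ∫ t in (0:ℝ)..1, (⟪gradient f w, v - w⟫ + L * t ^ α * ‖v - w‖ ^ (1 + α)) := by
    apply intervalIntegral.integral_mono_on zero_le_one (hcont.intervalIntegrable 0 1)
      (hubcont.intervalIntegrable 0 1)
    intro t ht
    have key : φ' t - ⟪gradient f w, v - w⟫ ≤ L * t ^ α * ‖v - w‖ ^ (1 + α) := by
      have h1 : φ' t - ⟪gradient f w, v - w⟫
          = ⟪gradient f (w + t • (v - w)) - gradient f w, v - w⟫ := by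
        rw [hφ', inner_sub_left]
      rw [h1]
      calc ⟪gradient f (w + t • (v - w)) - gradient f w, v - w⟫
          ≤ ‖gradient f (w + t • (v - w)) - gradient f w‖ * ‖v - w‖ :=
            real_inner_le_norm _ _
        _ ≤ (L * ‖(w + t • (v - w)) - w‖ ^ α) * ‖v - w‖ := by
            apply mul_le_mul_of_nonneg_right (hholder _ _) (norm_nonneg _)
        _ = L * t ^ α * ‖v - w‖ ^ (1 + α) := by
            have hn : ‖(w + t • (v - w)) - w‖ = t * ‖v - w‖ := by
              simp [norm_smul, abs_of_nonneg ht.1]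
            rw [hn, Real.mul_rpow ht.1 (norm_nonneg _),
              Real.rpow_add' (norm_nonneg _) (by positivity)]
            rw [Real.rpow_one]; ring
    linarith
  have hint : ∫ t in (0:ℝ)..1, (⟪gradient f w, v - w⟫ + L * t ^ α * ‖v - w‖ ^ (1 + α))
      = ⟪gradient f w, v - w⟫ + L / (1 + α) * ‖v - w‖ ^ (1 + α) := by
    have hi1 : IntervalIntegrable (fun t : ℝ => L * t ^ α * ‖v - w‖ ^ (1 + α))
        MeasureTheory.volume 0 1 := by
      exact (((continuous_const.mul hrpow_cont).mul continuous_const)).intervalIntegrable 0 1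
    have heq : (fun t : ℝ => L * t ^ α * ‖v - w‖ ^ (1 + α)) = fun t : ℝ => (L * ‖v - w‖ ^ (1 + α)) * t ^ α := by
      funext t; ring
    have h2nd : (∫ t in (0:ℝ)..1, L * t ^ α * ‖v - w‖ ^ (1 + α))
        = L / (1 + α) * ‖v - w‖ ^ (1 + α) := by
      rw [heq, intervalIntegral.integral_const_mul, integral_rpow (Or.inl (by linarith))]
      rw [Real.one_rpow, Real.zero_rpow (by positivity)]
      rw [sub_zero, add_comm α 1]
      ring
    rw [intervalIntegral.integral_add (intervalIntegrable_const (c := ⟪gradient f w, v - w⟫)) hi1, h2nd]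
    simp
  rw [hint] at hbound
  linarith [hfv ▸ hbound]

theorem self_bounding_holder {d : ℕ} (L α : ℝ) (hL : 0 < L)
    (hα : α ∈ Set.Ioc (0 : ℝ) 1)
    (f : EuclideanSpace ℝ (Fin d) → ℝ)
    (hdiff : Differentiable ℝ f)
    (hnonneg : ∀ w, 0 ≤ f w)
    (hholder : ∀ w v, ‖gradient f w - gradient f v‖ ≤ L * ‖w - v‖ ^ α) :
    ∀ w, ‖gradient f w‖ ≤
      (1 + 1 / α) ^ (α / (1 + α)) * L ^ (1 / (1 + α)) * (f w) ^ (α / (1 + α)) := by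
  obtain ⟨hα0, hα1⟩ := hα
  intro w
  have h1α : (0:ℝ) < 1 + α := by linarith
  have hfw := hnonneg w
  set G := ‖gradient f w‖ with hG
  have hGnn : (0:ℝ) ≤ G := norm_nonneg _
  rcases eq_or_lt_of_le hGnn with h0 | hGpos
  · rw [← h0]
    positivity
  · set s := (G / L) ^ (1/α) with hs_def
    have hs : 0 < s := Real.rpow_pos_of_pos (div_pos hGpos hL) _
    set v := w - (s / G) • gradient f w with hv
    have hvw : v - w = -((s/G) • gradient f w) := by
      rw [hv]; abel
    have hinner : ⟪gradient f w, v - w⟫ = -(s * G) := by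
      rw [hvw, inner_neg_right, real_inner_smul_right, real_inner_self_eq_norm_sq]
      rw [← hG]
      field_simp
    have hnvw : ‖v - w‖ = s := by
      rw [hvw, norm_neg, norm_smul, Real.norm_eq_abs,
        abs_of_nonneg (div_nonneg hs.le hGnn), ← hG]
      field_simp
    have hsα : s ^ α = G / L := by
      rw [hs_def, one_div, Real.rpow_inv_rpow (div_nonneg hGnn hL.le) hα0.ne']
    have hs1α : s ^ (1 + α) = s * (G / L) := by
      rw [Real.rpow_add hs, Real.rpow_one, hsα]
    have hkey := descent L α hL hα0 f hdiff hholder w v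
    rw [hinner, hnvw, hs1α] at hkey
    have hfv := hnonneg v
    have hmain : α / (1 + α) * (s * G) ≤ f w := by
      have hexp : L / (1 + α) * (s * (G / L)) = s * G / (1 + α) := by
        field_simp
      rw [hexp] at hkey
      have h1 : 0 ≤ f w - s * G + s * G / (1 + α) := by linarith
      have h2 : s * G - s * G / (1 + α) = α / (1 + α) * (s * G) := by
        field_simp; ring
      linarith
    have hA : (0:ℝ) < 1 + 1/α := by positivity
    have hLpow : (0:ℝ) < L ^ (1/α) := Real.rpow_pos_of_pos hL _
    have hsG : s * G = G ^ ((1 + α)/α) / L ^ (1/α) := by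
      have he : (1 + α)/α = 1/α + 1 := by field_simp
      rw [hs_def, Real.div_rpow hGnn hL.le, he, Real.rpow_add hGpos, Real.rpow_one]
      field_simp
    have hkey2 : G ^ ((1 + α)/α) ≤ (1 + 1/α) * L ^ (1/α) * f w := by
      rw [hsG] at hmain
      have h4 : G ^ ((1 + α)/α)
          = (1 + 1/α) * L ^ (1/α) * (α/(1+α) * (G ^ ((1 + α)/α) / L ^ (1/α))) := by
        field_simp
        ring
      rw [h4]
      exact mul_le_mul_of_nonneg_left hmain (by positivity)
    have hp : (0:ℝ) ≤ α / (1 + α) := by positivity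
    have hfinal := Real.rpow_le_rpow (by positivity) hkey2 hp
    have hGid : (G ^ ((1 + α)/α)) ^ (α/(1+α)) = G := by
      rw [← Real.rpow_mul hGnn]
      have : (1 + α)/α * (α/(1+α)) = 1 := by field_simp
      rw [this, Real.rpow_one]
    rw [hGid] at hfinal
    have hsplit : ((1 + 1/α) * L ^ (1/α) * f w) ^ (α/(1+α))
        = (1 + 1/α) ^ (α/(1+α)) * L ^ (1/(1+α)) * (f w) ^ (α/(1+α)) := by
      rw [Real.mul_rpow (by positivity) hfw, Real.mul_rpow hA.le hLpow.le]
      congr 2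
      rw [← Real.rpow_mul hL.le]
      congr 1
      field_simp
    rw [hsplit] at hfinal
    exact hfinal
end

section
/- If f : ℝ^d → ℝ is convex with (α, L)-Hölder continuous gradient for α ∈ (0,1], then for all w, v: ⟨w - v, ∇f(w) - ∇f(v)⟩ ≥ (2α/(1+α)) · L^{-1/α} · ‖∇f(w) - ∇f(v)‖₂^{(1+α)/α}. -/
open scoped RealInnerProductSpace


lemma grad_line_deriv {d : ℕ} {f : EuclideanSpace ℝ (Fin d) → ℝ}
    (hdiff : Differentiable ℝ f) (x u : EuclideanSpace ℝ (Fin d)) (t : ℝ) :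
    HasDerivAt (fun s : ℝ => f (x + s • u)) ⟪gradient f (x + t • u), u⟫ t := by
  have hline : HasDerivAt (fun s : ℝ => x + s • u) u t := by
    simpa using ((hasDerivAt_id t).smul_const u).const_add x
  have h := ((hdiff (x + t • u)).hasGradientAt.hasFDerivAt).comp_hasDerivAt t hline
  simp only [Function.comp_def, InnerProductSpace.toDual_apply_apply] at h
  exact h

lemma descent_lemma {d : ℕ} {f : EuclideanSpace ℝ (Fin d) → ℝ} {L α : ℝ}
    (hdiff : Differentiable ℝ f) (hL : 0 < L) (hα0 : 0 < α) (hα1 : α ≤ 1)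
    (hholder : ∀ w v, ‖gradient f w - gradient f v‖ ≤ L * ‖w - v‖ ^ α)
    (x y : EuclideanSpace ℝ (Fin d)) :
    f y ≤ f x + ⟪gradient f x, y - x⟫ + L * ‖y - x‖ ^ (1 + α) / (1 + α) := by
  have h1α : (0:ℝ) < 1 + α := by linarith
  rcases eq_or_ne y x with rfl | hyx
  · simp [Real.zero_rpow (by positivity : (1:ℝ) + α ≠ 0)]
  have hu : (0:ℝ) < ‖y - x‖ := by
    rw [norm_pos_iff]; exact sub_ne_zero_of_ne hyx
  set u := y - x with hu_def
  set C : ℝ := L * ‖u‖ ^ (1 + α) / (1 + α) with hC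
  set g : ℝ → ℝ := fun t => f (x + t • u) - f x - t * ⟪gradient f x, u⟫ with hg
  set g' : ℝ → ℝ := fun t => ⟪gradient f (x + t • u) - gradient f x, u⟫ with hg'
  set B : ℝ → ℝ := fun t => C * t ^ (1 + α) with hB
  set B' : ℝ → ℝ := fun t => L * ‖u‖ ^ (1 + α) * t ^ α with hB'
  have hgd : ∀ t : ℝ, HasDerivAt g (g' t) t := by
    intro t
    have h1 := (grad_line_deriv hdiff x u t).sub_const (f x)
    have h2 := h1.sub ((hasDerivAt_id t).mul_const ⟪gradient f x, u⟫)
    refine h2.congr_deriv ?_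
    show _ = ⟪gradient f (x + t • u) - gradient f x, u⟫
    rw [inner_sub_left]; ring
  have hBd : ∀ t : ℝ, HasDerivAt B (B' t) t := by
    intro t
    have h1 := (Real.hasDerivAt_rpow_const (x := t) (p := 1 + α) (Or.inr (by linarith : (1:ℝ) ≤ 1 + α))).const_mul C
    refine h1.congr_deriv ?_
    rw [hB', hC]
    have : (1 : ℝ) + α - 1 = α := by ring
    rw [this]
    field_simp
  have hbound : ∀ t ∈ Set.Ico (0:ℝ) 1, g' t ≤ B' t := by
    intro t ht
    have h1 : g' t ≤ ‖gradient f (x + t • u) - gradient f x‖ * ‖u‖ :=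
      real_inner_le_norm _ _
    have h2 : ‖gradient f (x + t • u) - gradient f x‖ ≤ L * ‖t • u‖ ^ α := by
      have := hholder (x + t • u) x
      simpa using this
    have h3 : ‖t • u‖ = t * ‖u‖ := by
      rw [norm_smul, Real.norm_eq_abs, abs_of_nonneg ht.1]
    have h4 : (t * ‖u‖) ^ α = t ^ α * ‖u‖ ^ α := Real.mul_rpow ht.1 (norm_nonneg u)
    have h5 : ‖u‖ ^ ((1:ℝ) + α) = ‖u‖ * ‖u‖ ^ α := by
      rw [Real.rpow_add hu, Real.rpow_one]
    calc g' t ≤ ‖gradient f (x + t • u) - gradient f x‖ * ‖u‖ := h1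
      _ ≤ L * ‖t • u‖ ^ α * ‖u‖ := by
          apply mul_le_mul_of_nonneg_right h2 (norm_nonneg u)
      _ = B' t := by rw [h3, h4, hB', h5]; ring
  have hg0 : g 0 ≤ B 0 := by
    simp [g, B, Real.zero_rpow (by positivity : (1:ℝ) + α ≠ 0)]
  have key : ∀ ⦃z⦄, z ∈ Set.Icc (0:ℝ) 1 → g z ≤ B z := by
    apply image_le_of_deriv_right_le_deriv_boundary
    · exact fun t _ => (hgd t).continuousAt.continuousWithinAt
    · exact fun t _ => (hgd t).hasDerivWithinAt
    · exact hg0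
    · exact fun t _ => (hBd t).continuousAt.continuousWithinAt
    · exact fun t _ => (hBd t).hasDerivWithinAt
    · exact fun t ht => hbound t ht
  have h1 := key (Set.mem_Icc.mpr ⟨zero_le_one, le_refl 1⟩)
  simp only [g, B, one_smul, add_sub_cancel, one_mul, Real.one_rpow, mul_one] at h1
  have hxy : x + u = y := by rw [hu_def]; abel
  rw [hxy, hC] at h1
  linarith

lemma convex_grad_ineq {d : ℕ} {f : EuclideanSpace ℝ (Fin d) → ℝ}
    (hdiff : Differentiable ℝ f) (hconv : ConvexOn ℝ Set.univ f)
    (x y : EuclideanSpace ℝ (Fin d)) :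
    f x + ⟪gradient f x, y - x⟫ ≤ f y := by
  have hc : ConvexOn ℝ Set.univ (fun t : ℝ => f (x + t • (y - x))) := by
    have h := hconv.comp_affineMap (AffineMap.lineMap x y)
    have he : (fun t : ℝ => f (x + t • (y - x))) = f ∘ ⇑(AffineMap.lineMap x y) := by
      funext t
      simp [AffineMap.lineMap_apply, add_comm]
    rw [he]
    simpa using h
  have hd := grad_line_deriv hdiff x (y - x) 0
  have hs := hc.le_slope_of_hasDerivAt (Set.mem_univ (0:ℝ)) (Set.mem_univ (1:ℝ))
      one_pos hd
  rw [slope_def_field] at hs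
  simp only [zero_smul, add_zero, one_smul, add_sub_cancel] at hs
  have : ⟪gradient f x, y - x⟫ ≤ f y - f x := by simpa using hs
  linarith

lemma key_ineq {d : ℕ} {f : EuclideanSpace ℝ (Fin d) → ℝ} {L α : ℝ}
    (hL : 0 < L) (hα0 : 0 < α) (hα1 : α ≤ 1)
    (hdiff : Differentiable ℝ f) (hconv : ConvexOn ℝ Set.univ f)
    (hholder : ∀ w v, ‖gradient f w - gradient f v‖ ≤ L * ‖w - v‖ ^ α)
    (w v : EuclideanSpace ℝ (Fin d)) :
    α / (1 + α) * L ^ (-(1 / α)) * ‖gradient f w - gradient f v‖ ^ ((1 + α) / α)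
      ≤ f v - f w - ⟪gradient f w, v - w⟫ := by
  have h1α : (0:ℝ) < 1 + α := by linarith
  have hcvx := convex_grad_ineq hdiff hconv w v
  set g := gradient f v - gradient f w with hgdef
  have hrev : ‖gradient f w - gradient f v‖ = ‖g‖ := by rw [hgdef, norm_sub_rev]
  rcases eq_or_ne g 0 with hg0 | hg0
  · rw [hrev, hg0]
    simp only [norm_zero, Real.zero_rpow (by positivity : (1 + α) / α ≠ 0), mul_zero]
    linarith
  set N := ‖g‖ with hN
  have hNpos : 0 < N := norm_pos_iff.mpr hg0
  have hNL : (0:ℝ) < N / L := div_pos hNpos hL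
  set t : ℝ := (N / L) ^ (1 / α) with ht
  have htpos : 0 < t := Real.rpow_pos_of_pos hNL _
  set s : ℝ := t / N with hs
  have hspos : 0 < s := div_pos htpos hNpos
  set y : EuclideanSpace ℝ (Fin d) := v - s • g with hy
  have hC := convex_grad_ineq hdiff hconv w y
  have hB := descent_lemma hdiff hL hα0 hα1 hholder v y
  have hyv : y - v = -(s • g) := by rw [hy]; abel
  have hnyv : ‖y - v‖ = s * N := by
    rw [hyv, norm_neg, norm_smul, Real.norm_eq_abs, abs_of_pos hspos]
  have hsN : s * N = t := div_mul_cancel₀ t (ne_of_gt hNpos)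
  have hinner1 : ⟪gradient f v, y - v⟫ = -(s * ⟪gradient f v, g⟫) := by
    rw [hyv, inner_neg_right, real_inner_smul_right]
  have hyw : y - w = (v - w) - s • g := by rw [hy]; abel
  have hinner2 : ⟪gradient f w, y - w⟫ = ⟪gradient f w, v - w⟫ - s * ⟪gradient f w, g⟫ := by
    rw [hyw, inner_sub_right, real_inner_smul_right]
  have hgg : ⟪gradient f v, g⟫ - ⟪gradient f w, g⟫ = N ^ (2:ℕ) := by
    rw [← inner_sub_left, ← hgdef, hN, ← real_inner_self_eq_norm_sq]
  -- combine
  have hmain : t * N - L * t ^ (1 + α) / (1 + α) ≤ f v - f w - ⟪gradient f w, v - w⟫ := by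
    rw [hinner2] at hC
    rw [hinner1, hnyv] at hB
    have hexp : s * (⟪gradient f v, g⟫ - ⟪gradient f w, g⟫) = t * N := by
      rw [hgg]
      have : s * N ^ (2:ℕ) = (s * N) * N := by ring
      rw [this, hsN]
    have hsn : (s * N) ^ (1 + α) = t ^ (1 + α) := by rw [hsN]
    rw [hsn] at hB
    nlinarith [hC, hB]
  -- compute the optimal value
  have e1 : N ^ ((1 + α) / α) * L ^ (-(1 / α)) = t * N := by
    have hd : (N / L) ^ (1 / α) = N ^ (1 / α) * L ^ (-(1 / α)) := by
      rw [Real.div_rpow hNpos.le hL.le, Real.rpow_neg hL.le, div_eq_mul_inv]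
    have hNr : N ^ ((1 + α) / α) = N ^ (1 / α) * N := by
      rw [show (1 + α) / α = 1 / α + 1 by field_simp, Real.rpow_add hNpos, Real.rpow_one]
    rw [hNr, ht, hd]; ring
  have e2 : L * t ^ (1 + α) = t * N := by
    have h2 : t ^ (1 + α) = (N / L) ^ ((1 + α) / α) := by
      rw [ht, ← Real.rpow_mul hNL.le]
      congr 1
      field_simp
    have h3 : (N / L) ^ ((1 + α) / α) = (N / L) ^ (1 / α) * (N / L) := by
      rw [show (1 + α) / α = 1 / α + 1 by field_simp, Real.rpow_add hNL, Real.rpow_one]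
    rw [h2, h3, ← ht]
    field_simp
  rw [hrev]
  have efinal : α / (1 + α) * L ^ (-(1 / α)) * N ^ ((1 + α) / α)
      = t * N - L * t ^ (1 + α) / (1 + α) := by
    rw [e2]
    have : α / (1 + α) * L ^ (-(1 / α)) * N ^ ((1 + α) / α)
        = α / (1 + α) * (N ^ ((1 + α) / α) * L ^ (-(1 / α))) := by ring
    rw [this, e1]
    field_simp
    ring
  rw [efinal]
  exact hmain

theorem cocoercivity_holder {d : ℕ} (L α : ℝ) (hL : 0 < L)
    (hα : α ∈ Set.Ioc (0 : ℝ) 1)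
    (f : EuclideanSpace ℝ (Fin d) → ℝ)
    (hdiff : Differentiable ℝ f)
    (hconv : ConvexOn ℝ Set.univ f)
    (hholder : ∀ w v, ‖gradient f w - gradient f v‖ ≤ L * ‖w - v‖ ^ α) :
    ∀ w v, (2 * α / (1 + α)) * L ^ (-(1 / α)) *
        ‖gradient f w - gradient f v‖ ^ ((1 + α) / α)
      ≤ ⟪w - v, gradient f w - gradient f v⟫ := by
  intro w v
  obtain ⟨hα0, hα1⟩ := hα
  have h1 := key_ineq hL hα0 hα1 hdiff hconv hholder w v
  have h2 := key_ineq hL hα0 hα1 hdiff hconv hholder v w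
  rw [show ‖gradient f v - gradient f w‖ = ‖gradient f w - gradient f v‖ from norm_sub_rev _ _]
    at h2
  have hid : ⟪w - v, gradient f w - gradient f v⟫
      = -⟪gradient f w, v - w⟫ - ⟪gradient f v, w - v⟫ := by
    rw [real_inner_comm]
    simp only [inner_sub_left, inner_sub_right]
    ring
  rw [hid]
  have hconst : (2 * α / (1 + α)) * L ^ (-(1 / α)) *
        ‖gradient f w - gradient f v‖ ^ ((1 + α) / α)
      = α / (1 + α) * L ^ (-(1 / α)) * ‖gradient f w - gradient f v‖ ^ ((1 + α) / α)
      + α / (1 + α) * L ^ (-(1 / α)) * ‖gradient f w - gradient f v‖ ^ ((1 + α) / α) := by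
    ring
  rw [hconst]
  linarith
end

section
/- If f : ℝ^d → ℝ is convex with (α, L)-Hölder continuous gradient for α ∈ [0,1), then for all w, v ∈ ℝ^d and η > 0: ‖(w - η∇f(w)) - (v - η∇f(v))‖₂² ≤ ‖w - v‖₂² + c² · η^{2/(1-α)}, where c = √((1-α)/(1+α)) · (2^{-α}L)^{1/(1-α)}. -/
open scoped RealInnerProductSpace

open Set

variable {E : Type*} [NormedAddCommGroup E] [InnerProductSpace ℝ E] [CompleteSpace E]

lemma line_hasDerivAt (f : E → ℝ) (hdiff : Differentiable ℝ f) (x u : E) (t : ℝ) :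
    HasDerivAt (fun s : ℝ => f (x + s • u)) ⟪gradient f (x + t • u), u⟫ t := by
  have hγ : HasDerivAt (fun s : ℝ => x + s • u) u t := by
    simpa using ((hasDerivAt_id t).smul_const u).const_add x
  have hf := (hdiff (x + t • u)).hasGradientAt
  have h2 := (hasGradientAt_iff_hasFDerivAt.mp hf).comp_hasDerivAt t hγ
  simpa [InnerProductSpace.toDual_apply_apply, Function.comp_def] using h2

lemma line_convexOn (f : E → ℝ) (hconv : ConvexOn ℝ Set.univ f) (x u : E) :
    ConvexOn ℝ Set.univ (fun t : ℝ => f (x + t • u)) := by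
  have h := hconv.comp_affineMap (AffineMap.lineMap x (x + u) : ℝ →ᵃ[ℝ] E)
  simp only [Function.comp, AffineMap.coe_lineMap, vsub_eq_sub, vadd_eq_add, add_sub_cancel_left, preimage_univ] at h
  refine h.congr fun t _ => ?_
  simp [add_comm]

set_option linter.unusedSectionVars false

lemma bregman (L α : ℝ) (hL : 0 < L) (hα : α ∈ Set.Ico (0:ℝ) 1)
    (f : E → ℝ) (hdiff : Differentiable ℝ f) (hconv : ConvexOn ℝ Set.univ f)
    (hholder : ∀ w v, ‖gradient f w - gradient f v‖ ≤ L * ‖w - v‖ ^ α) (x y : E) :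
    ⟪gradient f x, y - x⟫ ≤ f y - f x ∧
      f y - f x ≤ ⟪gradient f x, y - x⟫ + L / (1 + α) * ‖y - x‖ ^ (1 + α) := by
  set u := y - x with hu
  set h : ℝ → ℝ := fun t => ⟪gradient f (x + t • u), u⟫ with hh
  have hd : ∀ t : ℝ, HasDerivAt (fun s : ℝ => f (x + s • u)) (h t) t :=
    fun t => line_hasDerivAt f hdiff x u t
  have hψc := line_convexOn f hconv x u
  have hxy : x + u = y := by rw [hu]; abel
  have hψ1 : f (x + (1:ℝ) • u) = f y := by rw [one_smul, hxy]
  have hψ0 : f (x + (0:ℝ) • u) = f x := by rw [zero_smul, add_zero]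
  have hmono : Monotone h := by
    have hm := hψc.monotoneOn_deriv (fun t _ => (hd t).differentiableAt)
    intro a b hab
    have := hm (mem_univ a) (mem_univ b) hab
    rwa [(hd a).deriv, (hd b).deriv] at this
  -- lower bound
  have hlow : h 0 ≤ f y - f x := by
    have := hψc.le_slope_of_hasDerivAt (mem_univ (0:ℝ)) (mem_univ (1:ℝ)) one_pos (hd 0)
    rw [slope_def_field] at this
    simpa [hxy] using this
  have hh0 : h 0 = ⟪gradient f x, y - x⟫ := by
    simp [hh, hu]
  constructor
  · rw [← hh0]; exact hlow
  · -- upper bound via FTC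
    have hint : IntervalIntegrable h MeasureTheory.volume 0 1 :=
      (hmono.monotoneOn _).intervalIntegrable
    have hftc : ∫ t in (0:ℝ)..1, h t = f y - f x := by
      rw [intervalIntegral.integral_eq_sub_of_hasDerivAt (fun t _ => hd t) hint, hψ1, hψ0]
    have hbound : ∀ t ∈ Icc (0:ℝ) 1,
        h t ≤ h 0 + (L * ‖u‖ ^ (1 + α)) * t ^ α := by
      intro t ht
      have h1 : h t - h 0 = ⟪gradient f (x + t • u) - gradient f x, u⟫ := by
        simp [hh, inner_sub_left]
      have h2 : h t - h 0 ≤ ‖gradient f (x + t • u) - gradient f x‖ * ‖u‖ := by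
        rw [h1]; exact real_inner_le_norm _ _
      have h3 : ‖gradient f (x + t • u) - gradient f x‖ ≤ L * ‖t • u‖ ^ α := by
        have := hholder (x + t • u) x
        simpa using this
      have h4 : ‖t • u‖ = t * ‖u‖ := by
        rw [norm_smul, Real.norm_eq_abs, abs_of_nonneg ht.1]
      have h5 : (t * ‖u‖) ^ α = t ^ α * ‖u‖ ^ α :=
        Real.mul_rpow ht.1 (norm_nonneg u)
      have h6 : ‖u‖ ^ (1 + α) = ‖u‖ ^ (1:ℝ) * ‖u‖ ^ α :=
        Real.rpow_add' (norm_nonneg u) (by intro hc; linarith [hα.1])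
      have h7 : h t - h 0 ≤ L * (t ^ α * ‖u‖ ^ α) * ‖u‖ := by
        calc h t - h 0 ≤ ‖gradient f (x + t • u) - gradient f x‖ * ‖u‖ := h2
          _ ≤ L * ‖t • u‖ ^ α * ‖u‖ := by
              apply mul_le_mul_of_nonneg_right h3 (norm_nonneg u)
          _ = L * (t ^ α * ‖u‖ ^ α) * ‖u‖ := by rw [h4, h5]
      have : h t - h 0 ≤ (L * ‖u‖ ^ (1 + α)) * t ^ α := by
        rw [h6, Real.rpow_one]
        calc h t - h 0 ≤ L * (t ^ α * ‖u‖ ^ α) * ‖u‖ := h7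
          _ = L * (‖u‖ * ‖u‖ ^ α) * t ^ α := by ring
      linarith
    have hintg : IntervalIntegrable (fun t => h 0 + (L * ‖u‖ ^ (1 + α)) * t ^ α)
        MeasureTheory.volume 0 1 := by
      apply IntervalIntegrable.add intervalIntegrable_const
      exact (intervalIntegral.intervalIntegrable_rpow (Or.inl hα.1)).const_mul _
    have hcmp : ∫ t in (0:ℝ)..1, h t
        ≤ ∫ t in (0:ℝ)..1, (h 0 + (L * ‖u‖ ^ (1 + α)) * t ^ α) :=
      intervalIntegral.integral_mono_on zero_le_one hint hintg hbound
    have hval : ∫ t in (0:ℝ)..1, (h 0 + (L * ‖u‖ ^ (1 + α)) * t ^ α)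
        = h 0 + (L * ‖u‖ ^ (1 + α)) * (1 / (α + 1)) := by
      rw [intervalIntegral.integral_add intervalIntegrable_const
          ((intervalIntegral.intervalIntegrable_rpow (Or.inl hα.1)).const_mul _),
        intervalIntegral.integral_const, intervalIntegral.integral_const_mul,
        integral_rpow (Or.inl (by linarith [hα.1]))]
      have : (1:ℝ) ^ (α + 1) = 1 := Real.one_rpow _
      rw [this, Real.zero_rpow (by intro hc; linarith [hα.1])]
      simp
    rw [hftc] at hcmp
    rw [hval] at hcmp
    rw [← hh0]
    calc f y - f x ≤ h 0 + (L * ‖u‖ ^ (1 + α)) * (1 / (α + 1)) := hcmp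
      _ = h 0 + L / (1 + α) * ‖u‖ ^ (1 + α) := by ring_nf

lemma alg1 (L α s : ℝ) (hL : 0 < L) (hα0 : 0 < α) (hs : 0 < s) :
    2 * ((L ^ (-(1:ℝ)/α) * s ^ ((1-α)/α)) * s^(2:ℕ))
      - 2 * (L/(1+α) * ((L ^ (-(1:ℝ)/α) * s ^ ((1-α)/α)) * s)^(1+α))
    = 2*α/(1+α) * L^(-(1:ℝ)/α) * s^((1+α)/α) := by
  have ha1 : (0:ℝ) < 1 + α := by linarith
  have hLa : (0:ℝ) < L ^ (-(1:ℝ)/α) := Real.rpow_pos_of_pos hL _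
  have hsa : (0:ℝ) < s ^ ((1-α)/α) := Real.rpow_pos_of_pos hs _
  have e1 : ((L ^ (-(1:ℝ)/α) * s ^ ((1-α)/α)) * s)^(1+α)
      = L ^ ((-(1:ℝ)/α)*(1+α)) * s ^ ((1-α)/α*(1+α)) * s^(1+α) := by
    rw [Real.mul_rpow (by positivity) hs.le, Real.mul_rpow hLa.le hsa.le,
        ← Real.rpow_mul hL.le, ← Real.rpow_mul hs.le]
  have E1 : (L ^ (-(1:ℝ)/α) * s ^ ((1-α)/α)) * s^(2:ℕ)
      = L ^ (-(1:ℝ)/α) * s ^ ((1+α)/α) := by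
    have h2 : s^(2:ℕ) = s^(2:ℝ) := by
      rw [← Real.rpow_natCast s 2]; norm_num
    rw [h2, mul_assoc, ← Real.rpow_add hs]
    congr 2
    field_simp; ring
  have f1 : L * L^((-(1:ℝ)/α)*(1+α)) = L^(-(1:ℝ)/α) := by
    nth_rewrite 1 [← Real.rpow_one L]
    rw [← Real.rpow_add hL]
    congr 1
    field_simp
    ring
  have f2 : s^((1-α)/α*(1+α)) * s^(1+α) = s^((1+α)/α) := by
    rw [← Real.rpow_add hs]
    congr 1
    field_simp; ring
  have E2 : L/(1+α) * ((L ^ (-(1:ℝ)/α) * s ^ ((1-α)/α)) * s)^(1+α)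
      = 1/(1+α) * (L^(-(1:ℝ)/α) * s^((1+α)/α)) := by
    rw [e1, ← f1, ← f2]; ring
  rw [E1, E2]
  field_simp
  ring

lemma cocoercive (L α : ℝ) (hL : 0 < L) (hα : α ∈ Set.Ico (0:ℝ) 1) (hα0 : 0 < α)
    (f : E → ℝ) (hdiff : Differentiable ℝ f) (hconv : ConvexOn ℝ Set.univ f)
    (hholder : ∀ w v, ‖gradient f w - gradient f v‖ ≤ L * ‖w - v‖ ^ α) (w v : E) :
    2*α/(1+α) * L^(-(1:ℝ)/α) * ‖gradient f w - gradient f v‖ ^ ((1+α)/α)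
      ≤ ⟪gradient f w - gradient f v, w - v⟫ := by
  set s := ‖gradient f w - gradient f v‖ with hsdef
  have hs0 : 0 ≤ s := norm_nonneg _
  rcases eq_or_lt_of_le hs0 with hs | hs
  · -- s = 0 : gradient difference is zero
    have hg : gradient f w - gradient f v = 0 := by
      rw [← norm_eq_zero, ← hsdef, ← hs]
    rw [hg]
    simp only [inner_zero_left]
    rw [← hs, Real.zero_rpow (by positivity)]
    simp
  · set t := L ^ (-(1:ℝ)/α) * s ^ ((1-α)/α) with htdef
    have ht : 0 < t := by positivity
    have main : ∀ a b : E, ‖gradient f a - gradient f b‖ = s →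
        f a - f b + ⟪gradient f a, b - a⟫
          ≤ -(t * s^(2:ℕ)) + L/(1+α) * (t*s)^(1+α) := by
      intro a b hab
      set z := b - t • (gradient f b - gradient f a) with hz
      have h1 := (bregman L α hL hα f hdiff hconv hholder a z).1
      have h2 := (bregman L α hL hα f hdiff hconv hholder b z).2
      have hzb : z - b = t • (gradient f a - gradient f b) := by
        rw [hz]; rw [smul_sub, smul_sub]; abel
      have hnzb : ‖z - b‖ = t * s := by
        rw [hzb, norm_smul, Real.norm_eq_abs, abs_of_pos ht, hab]
      have hib : ⟪gradient f b, z - b⟫ = t * ⟪gradient f b, gradient f a - gradient f b⟫ := by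
        rw [hzb, real_inner_smul_right]
      have hza : z - a = (b - a) + t • (gradient f a - gradient f b) := by
        rw [hz, smul_sub, smul_sub]; abel
      have hia : ⟪gradient f a, z - a⟫
          = ⟪gradient f a, b - a⟫ + t * ⟪gradient f a, gradient f a - gradient f b⟫ := by
        rw [hza, inner_add_right, real_inner_smul_right]
      have hinner : t * ⟪gradient f b, gradient f a - gradient f b⟫
          - t * ⟪gradient f a, gradient f a - gradient f b⟫ = -(t * s^(2:ℕ)) := by
        have : ⟪gradient f b, gradient f a - gradient f b⟫
            - ⟪gradient f a, gradient f a - gradient f b⟫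
            = -(⟪gradient f a - gradient f b, gradient f a - gradient f b⟫) := by
          rw [← inner_sub_left]
          have : gradient f b - gradient f a = -(gradient f a - gradient f b) := by abel
          rw [this, inner_neg_left]
        have hself : ⟪gradient f a - gradient f b, gradient f a - gradient f b⟫
            = s^(2:ℕ) := by
          rw [real_inner_self_eq_norm_sq, hab]
        nlinarith [this, hself]
      rw [hia] at h1
      rw [hib, hnzb] at h2
      linarith
    have m1 := main w v rfl
    have m2 := main v w (by rw [norm_sub_rev])
    have hpsum : ⟪gradient f w, v - w⟫ + ⟪gradient f v, w - v⟫
        = -⟪gradient f w - gradient f v, w - v⟫ := by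
      rw [inner_sub_left]
      have : v - w = -(w - v) := by abel
      rw [this, inner_neg_right]
      ring
    have halg := alg1 L α s hL hα0 hs
    rw [htdef] at *
    nlinarith [m1, m2, hpsum, halg]

lemma scalar_ineq (L α η s : ℝ) (hL : 0 < L) (hα0 : 0 < α) (hα1 : α < 1) (hη : 0 < η)
    (hs : 0 ≤ s) :
    η * s^(2:ℕ) ≤ 2 * (2*α/(1+α) * L^(-(1:ℝ)/α)) * s^((1+α)/α)
      + ((1-α)/(1+α) * ((2:ℝ)^(-α) * L)^(2/(1-α))) * η^((1+α)/(1-α)) := by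
  have ha1 : (0:ℝ) < 1 + α := by linarith
  have ha2 : (0:ℝ) < 1 - α := by linarith
  rcases eq_or_lt_of_le hs with hs0 | hs0
  · rw [← hs0, Real.zero_rpow (by positivity)]
    have : (0:ℝ)^(2:ℕ) = 0 := by norm_num
    rw [this]
    have h1 : (0:ℝ) ≤ (1-α)/(1+α) * ((2:ℝ)^(-α) * L)^(2/(1-α)) := by positivity
    have h2 : (0:ℝ) ≤ η^((1+α)/(1-α)) := Real.rpow_nonneg hη.le _
    nlinarith
  · set P := (1+α)/(2*α) with hP
    set Q := (1+α)/(1-α) with hQ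
    have hP0 : 0 < P := by positivity
    have hQ0 : 0 < Q := by positivity
    have hPQ : P.HolderConjugate Q := by
      rw [Real.holderConjugate_iff]
      constructor
      · rw [hP, lt_div_iff₀ (by positivity)]; linarith
      · rw [hP, hQ]; field_simp <;> ring
    set A := (2:ℝ)^(2*α/(1+α)) * L^(-(2/(1+α))) with hA
    have hA0 : 0 < A := by positivity
    have young := Real.young_inequality_of_nonneg
      (mul_nonneg hA0.le (Real.rpow_nonneg hs 2)) (div_nonneg hη.le hA0.le) hPQ
    have lhs_eq : (A * s^(2:ℝ)) * (η/A) = η * s^(2:ℝ) := by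
      field_simp <;> ring
    have hAP : A^P = 2 * L^(-(1:ℝ)/α) := by
      rw [hA, Real.mul_rpow (by positivity) (by positivity),
          ← Real.rpow_mul (by norm_num : (0:ℝ) ≤ 2), ← Real.rpow_mul hL.le]
      have e1 : 2*α/(1+α)*P = 1 := by rw [hP]; field_simp <;> ring
      have e2 : (-(2/(1+α)))*P = -(1:ℝ)/α := by rw [hP]; field_simp <;> ring
      rw [e1, e2, Real.rpow_one]
    have hs2P : (s^(2:ℝ))^P = s^((1+α)/α) := by
      rw [← Real.rpow_mul hs]
      congr 1
      rw [hP]; field_simp <;> ring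
    have hc0 : ((2:ℝ)^(-α) * L)^(2/(1-α)) = 2^(-(2*α/(1-α))) * L^(2/(1-α)) := by
      rw [Real.mul_rpow (by positivity) hL.le, ← Real.rpow_mul (by norm_num : (0:ℝ) ≤ 2)]
      congr 2
      ring
    have hAQv : A^Q = 2^(2*α/(1-α)) * L^(-(2/(1-α))) := by
      rw [hA, Real.mul_rpow (by positivity) (by positivity),
          ← Real.rpow_mul (by norm_num : (0:ℝ) ≤ 2), ← Real.rpow_mul hL.le]
      have e1 : 2*α/(1+α)*Q = 2*α/(1-α) := by rw [hQ]; field_simp <;> ring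
      have e2 : (-(2/(1+α)))*Q = -(2/(1-α)) := by rw [hQ]; field_simp <;> ring
      rw [e1, e2]
    have key : ((2:ℝ)^(-α) * L)^(2/(1-α)) * A^Q = 1 := by
      rw [hc0, hAQv, mul_mul_mul_comm, ← Real.rpow_add (by norm_num : (0:ℝ) < 2),
        ← Real.rpow_add hL]
      norm_num
    have hc0inv : ((2:ℝ)^(-α) * L)^(2/(1-α)) = (A^Q)⁻¹ :=
      eq_inv_of_mul_eq_one_left key
    have hAQ0 : A^Q ≠ 0 := (Real.rpow_pos_of_pos hA0 Q).ne'
    have g1 : (A * s^(2:ℝ))^P / P = 2 * (2*α/(1+α) * L^(-(1:ℝ)/α)) * s^((1+α)/α) := by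
      rw [Real.mul_rpow hA0.le (Real.rpow_nonneg hs _), hAP, hs2P, hP]
      field_simp <;> ring
    have g2 : (η/A)^Q / Q = ((1-α)/(1+α) * ((2:ℝ)^(-α) * L)^(2/(1-α))) * η^Q := by
      rw [Real.div_rpow hη.le hA0.le, hc0inv, hQ]
      rw [div_div]
      field_simp <;> ring
    have h2cast : s^(2:ℕ) = s^(2:ℝ) := by
      rw [← Real.rpow_natCast s 2]; norm_num
    calc η * s^(2:ℕ) = (A * s^(2:ℝ)) * (η/A) := by rw [lhs_eq, h2cast]
      _ ≤ (A * s^(2:ℝ))^P / P + (η/A)^Q / Q := young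
      _ = 2 * (2*α/(1+α) * L^(-(1:ℝ)/α)) * s^((1+α)/α)
          + ((1-α)/(1+α) * ((2:ℝ)^(-α) * L)^(2/(1-α))) * η^Q := by rw [g1, g2]


theorem gd_almost_nonexpansive_holder {d : ℕ} (L α : ℝ) (hL : 0 < L)
    (hα : α ∈ Set.Ico (0 : ℝ) 1)
    (f : EuclideanSpace ℝ (Fin d) → ℝ)
    (hdiff : Differentiable ℝ f)
    (hconv : ConvexOn ℝ Set.univ f)
    (hholder : ∀ w v, ‖gradient f w - gradient f v‖ ≤ L * ‖w - v‖ ^ α) :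
    ∀ w v : EuclideanSpace ℝ (Fin d), ∀ η : ℝ, 0 < η →
      ‖(w - η • gradient f w) - (v - η • gradient f v)‖ ^ 2
        ≤ ‖w - v‖ ^ 2 +
          (Real.sqrt ((1 - α) / (1 + α)) * ((2 : ℝ) ^ (-α) * L) ^ (1 / (1 - α))) ^ 2
            * η ^ (2 / (1 - α)) := by
  intro w v η hη
  have ha1 : (0:ℝ) < 1 + α := by linarith [hα.1]
  have ha2 : (0:ℝ) < 1 - α := by linarith [hα.2]
  set g := gradient f w - gradient f v with hg
  set s := ‖g‖ with hs
  set p := ⟪g, w - v⟫ with hp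
  have hp0 : 0 ≤ p := by
    have h1 := (bregman L α hL hα f hdiff hconv hholder w v).1
    have h2 := (bregman L α hL hα f hdiff hconv hholder v w).1
    have he : p = -⟪gradient f w, v - w⟫ - ⟪gradient f v, w - v⟫ := by
      rw [hp, hg, inner_sub_left]
      have hvw : v - w = -(w - v) := by abel
      rw [hvw, inner_neg_right]
      ring
    rw [he]; linarith
  have hrw : (w - η • gradient f w) - (v - η • gradient f v) = (w - v) - η • g := by
    rw [hg, smul_sub]; abel
  rw [hrw, norm_sub_sq_real]
  have hi : ⟪w - v, η • g⟫ = η * p := by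
    rw [real_inner_smul_right, hp, real_inner_comm]
  have hn : ‖η • g‖^2 = η^2 * s^2 := by
    rw [norm_smul, mul_pow, Real.norm_eq_abs, sq_abs, hs]
  rw [hi, hn]
  have hC : (Real.sqrt ((1 - α) / (1 + α)) * ((2 : ℝ) ^ (-α) * L) ^ (1 / (1 - α))) ^ 2
      = (1-α)/(1+α) * ((2:ℝ)^(-α) * L)^(2/(1-α)) := by
    rw [mul_pow, Real.sq_sqrt (div_nonneg ha2.le ha1.le)]
    congr 1
    rw [← Real.rpow_natCast (((2:ℝ)^(-α) * L)^(1/(1-α))) 2, ← Real.rpow_mul (by positivity)]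
    congr 1
    push_cast
    ring
  rw [hC]
  have key : η^2 * s^2 ≤ 2 * (η * p)
      + (1-α)/(1+α) * ((2:ℝ)^(-α) * L)^(2/(1-α)) * η^(2/(1-α)) := by
    rcases eq_or_lt_of_le hα.1 with h0 | h0
    · -- α = 0
      have hsL : s ≤ L := by
        have := hholder w v
        rw [← h0] at this
        simpa [Real.rpow_zero] using this
      have hα' : α = 0 := h0.symm
      rw [hα']
      norm_num
      have h1 : s^2 ≤ L^2 := by nlinarith [hsL, norm_nonneg g]
      have h2 : η^2*s^2 ≤ η^2*L^2 := mul_le_mul_of_nonneg_left h1 (sq_nonneg η)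
      have h3 : 0 ≤ η * p := mul_nonneg hη.le hp0
      nlinarith [h2, h3]
    · -- 0 < α
      have hcc := cocoercive L α hL hα h0 f hdiff hconv hholder w v
      have hsc := scalar_ineq L α η s hL h0 hα.2 hη (norm_nonneg g)
      rw [← hs] at hcc
      rw [← hp] at hcc
      have hQ1 : η^((2:ℝ)/(1-α)) = η^((1+α)/(1-α)) * η := by
        rw [← Real.rpow_add_one hη.ne']
        congr 1
        field_simp
        norm_num
      have m1 := mul_le_mul_of_nonneg_left hsc hη.le
      have m2 := mul_le_mul_of_nonneg_left hcc hη.le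
      have hC0 : 0 ≤ (1-α)/(1+α) * ((2:ℝ)^(-α) * L)^(2/(1-α)) := by positivity
      nlinarith [m1, m2, hQ1, hC0, Real.rpow_nonneg hη.le ((1+α)/(1-α))]
  linarith
end
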